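/- For nonnegative integers a, b, the integral over the triangle T with vertices (0,0), (2,0), (1,1) of y^a · |T(x,y)|^b dx dy equals 2 · b! · (a+1)! / ((a+b+1) · (a+b+2)!), where |T(x,y)| = y(2-x-y)/(x+y). Equivalently this equals (2 / ((a+b+1)(a+b+2))) · binomial(a+b+1, b)^{-1}. -/

import Mathlib

open Real MeasureTheory Set

/-- The unit triangle with vertices A = (0,0), B = (2,0), C = (1,1). -/
def unitTriangle : Set (ℝ × ℝ) := {p | 0 ≤ p.2 ∧ p.2 ≤ p.1 ∧ p.2 ≤ 2 - p.1}

lemma beta_nat : ∀ (n m : ℕ), ∫ t in (0:ℝ)..1, t ^ m * (1 - t) ^ n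
    = (m.factorial * n.factorial : ℝ) / (m + n + 1).factorial := by
  intro n
  induction n with
  | zero =>
    intro m
    simp only [pow_zero, mul_one, integral_pow, one_pow, Nat.factorial_zero, Nat.cast_one,
      Nat.add_zero, Nat.factorial_succ]
    have h1 : (m.factorial : ℝ) ≠ 0 := Nat.cast_ne_zero.mpr (Nat.factorial_ne_zero _)
    push_cast
    rw [zero_pow (by omega), sub_zero]
    field_simp
  | succ n ih =>
    intro m
    have key : ∀ t : ℝ, t ^ m * (1 - t) ^ (n + 1)
        = t ^ m * (1 - t) ^ n - t ^ (m + 1) * (1 - t) ^ n := by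
      intro t; ring
    have i1 : IntervalIntegrable (fun t : ℝ => t ^ m * (1 - t) ^ n) volume 0 1 := by
      apply Continuous.intervalIntegrable; continuity
    have i2 : IntervalIntegrable (fun t : ℝ => t ^ (m + 1) * (1 - t) ^ n) volume 0 1 := by
      apply Continuous.intervalIntegrable; continuity
    simp only [key]
    rw [intervalIntegral.integral_sub i1 i2, ih m, ih (m + 1)]
    have h1 : ((m + n + 1).factorial : ℝ) ≠ 0 := Nat.cast_ne_zero.mpr (Nat.factorial_ne_zero _)
    have h2 : ((m + 1 + n + 1).factorial : ℝ) ≠ 0 := Nat.cast_ne_zero.mpr (Nat.factorial_ne_zero _)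
    have e1 : m + 1 + n + 1 = (m + n + 1) + 1 := by ring
    have e2 : m + (n + 1) + 1 = (m + n + 1) + 1 := by ring
    rw [e1, e2, Nat.factorial_succ]
    push_cast [Nat.factorial_succ]
    field_simp
    ring

noncomputable def phi : ℝ × ℝ → ℝ × ℝ := fun p => (2 * p.2 - p.1 * p.2, p.1 * p.2)

noncomputable def phi' (p : ℝ × ℝ) : ℝ × ℝ →L[ℝ] ℝ × ℝ :=
  ((2:ℝ) • ContinuousLinearMap.snd ℝ ℝ ℝ -
    (p.1 • ContinuousLinearMap.snd ℝ ℝ ℝ + p.2 • ContinuousLinearMap.fst ℝ ℝ ℝ)).prod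
  (p.1 • ContinuousLinearMap.snd ℝ ℝ ℝ + p.2 • ContinuousLinearMap.fst ℝ ℝ ℝ)

lemma hasFDerivAt_phi (p : ℝ × ℝ) : HasFDerivAt phi (phi' p) p := by
  have hmul : HasFDerivAt (fun q : ℝ × ℝ => q.1 * q.2)
      (p.1 • ContinuousLinearMap.snd ℝ ℝ ℝ + p.2 • ContinuousLinearMap.fst ℝ ℝ ℝ) p :=
    (hasFDerivAt_fst (𝕜 := ℝ) (E := ℝ) (F := ℝ)).mul hasFDerivAt_snd
  have h1 : HasFDerivAt (fun q : ℝ × ℝ => 2 * q.2)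
      ((2:ℝ) • ContinuousLinearMap.snd ℝ ℝ ℝ) p :=
    (hasFDerivAt_snd (𝕜 := ℝ) (E := ℝ) (F := ℝ)).const_mul 2
  exact HasFDerivAt.prodMk (h1.sub hmul) hmul

lemma det_phi' (p : ℝ × ℝ) : (phi' p).det = -(2 * p.2) := by
  have hM : LinearMap.toMatrix (Module.Basis.finTwoProd ℝ) (Module.Basis.finTwoProd ℝ)
      ((phi' p : ℝ × ℝ →L[ℝ] ℝ × ℝ) : ℝ × ℝ →ₗ[ℝ] ℝ × ℝ)
      = !![-p.2, 2 - p.1; p.2, p.1] := by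
    ext i j
    fin_cases i <;> fin_cases j <;>
      simp [LinearMap.toMatrix_apply, Module.Basis.finTwoProd, phi', ContinuousLinearMap.prod]
  have hd : (phi' p).det = LinearMap.det ((phi' p : ℝ × ℝ →L[ℝ] ℝ × ℝ) : ℝ × ℝ →ₗ[ℝ] ℝ × ℝ) := rfl
  rw [hd, ← LinearMap.det_toMatrix (Module.Basis.finTwoProd ℝ), hM, Matrix.det_fin_two_of]
  ring

def uSq : Set (ℝ × ℝ) := Ioo (0:ℝ) 1 ×ˢ Ioo (0:ℝ) 1

def openTriangle : Set (ℝ × ℝ) := {p | 0 < p.2 ∧ p.2 < p.1 ∧ p.2 < 2 - p.1}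

lemma image_phi : phi '' uSq = openTriangle := by
  ext p
  constructor
  · rintro ⟨⟨s, t⟩, ⟨⟨hs0, hs1⟩, ht0, ht1⟩, rfl⟩
    refine ⟨?_, ?_, ?_⟩ <;> simp only [phi, openTriangle, Set.mem_setOf_eq] <;> nlinarith
  · rintro ⟨h1, h2, h3⟩
    have hxy : 0 < p.1 + p.2 := by nlinarith
    refine ⟨(2 * p.2 / (p.1 + p.2), (p.1 + p.2) / 2), ⟨⟨?_, ?_⟩, ?_, ?_⟩, ?_⟩
    · positivity
    · rw [div_lt_one hxy]; linarith
    · linarith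
    · linarith
    · have h2' : p.1 + p.2 ≠ 0 := ne_of_gt hxy
      simp only [phi]
      have : 2 * p.2 / (p.1 + p.2) * ((p.1 + p.2) / 2) = p.2 := by field_simp
      rw [this]
      refine Prod.ext ?_ rfl
      simp only []
      ring

lemma injOn_phi : InjOn phi uSq := by
  rintro ⟨s, t⟩ ⟨⟨hs0, hs1⟩, ht0, ht1⟩ ⟨s', t'⟩ ⟨⟨hs0', hs1'⟩, ht0', ht1'⟩ h
  simp only [phi, Prod.mk.injEq] at h ⊢
  obtain ⟨h1, h2⟩ := h
  have ht : t = t' := by nlinarith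
  subst ht
  exact ⟨by nlinarith, rfl⟩

lemma null_graph (g : ℝ → ℝ) (hg : Measurable g) :
    volume {p : ℝ × ℝ | p.2 = g p.1} = 0 := by
  have hm : MeasurableSet {p : ℝ × ℝ | p.2 = g p.1} :=
    measurableSet_eq_fun measurable_snd (hg.comp measurable_fst)
  rw [Measure.volume_eq_prod, Measure.prod_apply hm]
  have : ∀ x : ℝ, (Prod.mk x ⁻¹' {p : ℝ × ℝ | p.2 = g p.1}) = {g x} := by
    intro x; ext y; simp
  simp only [this, Real.volume_singleton, lintegral_zero]

lemma triangle_ae : openTriangle =ᵐ[volume] unitTriangle := by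
  have hsub : openTriangle ⊆ unitTriangle := by
    rintro p ⟨h1, h2, h3⟩; exact ⟨le_of_lt h1, le_of_lt h2, le_of_lt h3⟩
  have hdiff : unitTriangle \ openTriangle ⊆
      {p : ℝ × ℝ | p.2 = (0:ℝ)} ∪ {p : ℝ × ℝ | p.2 = p.1} ∪ {p : ℝ × ℝ | p.2 = 2 - p.1} := by
    rintro p ⟨⟨h1, h2, h3⟩, hn⟩
    simp only [openTriangle, Set.mem_setOf_eq, not_and_or, not_lt] at hn
    rcases hn with h | h | h
    · exact Or.inl (Or.inl (le_antisymm h h1))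
    · exact Or.inl (Or.inr (le_antisymm h2 h))
    · exact Or.inr (le_antisymm h3 h)
  have hnull : volume (unitTriangle \ openTriangle) = 0 := by
    refine measure_mono_null hdiff ?_
    refine measure_union_null (measure_union_null ?_ ?_) ?_
    · exact null_graph (fun _ => 0) measurable_const
    · exact null_graph id measurable_id
    · exact null_graph (fun x => 2 - x) (measurable_const.sub measurable_id)
  refine (MeasureTheory.ae_eq_set.mpr ⟨?_, hnull⟩)
  rw [Set.diff_eq_empty.mpr hsub]
  simp

theorem triangle_moment_integral (a b : ℕ) :
    (∫ p in unitTriangle, p.2 ^ a * (p.2 * (2 - p.1 - p.2) / (p.1 + p.2)) ^ b) =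
        2 * (Nat.factorial b) * (Nat.factorial (a + 1)) /
          ((a + b + 1) * Nat.factorial (a + b + 2)) ∧
    (∫ p in unitTriangle, p.2 ^ a * (p.2 * (2 - p.1 - p.2) / (p.1 + p.2)) ^ b) =
        2 / ((a + b + 1) * (a + b + 2)) * ((Nat.choose (a + b + 1) b : ℝ))⁻¹ := by
  set g : ℝ × ℝ → ℝ := fun p => p.2 ^ a * (p.2 * (2 - p.1 - p.2) / (p.1 + p.2)) ^ b with hg
  have hsq : MeasurableSet uSq := measurableSet_Ioo.prod measurableSet_Ioo
  have step1 : (∫ p in unitTriangle, g p) = ∫ p in uSq, |(phi' p).det| • g (phi p) := by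
    rw [← setIntegral_congr_set triangle_ae, ← image_phi]
    exact integral_image_eq_integral_abs_det_fderiv_smul volume hsq
      (fun p _ => (hasFDerivAt_phi p).hasFDerivWithinAt) injOn_phi g
  have step2 : (∫ p in uSq, |(phi' p).det| • g (phi p))
      = ∫ p in uSq, p.1 ^ (a + b) * (2 * (p.2 ^ (a + 1) * (1 - p.2) ^ b)) := by
    refine setIntegral_congr_fun hsq ?_
    rintro ⟨s, t⟩ ⟨⟨hs0, hs1⟩, ht0, ht1⟩
    have ht0' : (t : ℝ) ≠ 0 := ne_of_gt ht0
    simp only [det_phi', phi, hg, smul_eq_mul]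
    have e1 : s * t * (2 - (2 * t - s * t) - s * t) / (2 * t - s * t + s * t)
        = s * (1 - t) := by
      have : 2 * t - s * t + s * t = 2 * t := by ring
      rw [this]
      field_simp
      ring
    rw [e1, abs_neg, abs_of_pos (by positivity), mul_pow s (1 - t) b]
    ring
  have step3 : (∫ p in uSq, p.1 ^ (a + b) * (2 * (p.2 ^ (a + 1) * (1 - p.2) ^ b)))
      = (∫ s in Ioo (0:ℝ) 1, s ^ (a + b)) *
        ∫ t in Ioo (0:ℝ) 1, 2 * (t ^ (a + 1) * (1 - t) ^ b) := by
    rw [uSq, Measure.volume_eq_prod]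
    exact setIntegral_prod_mul (fun s : ℝ => s ^ (a + b))
      (fun t : ℝ => 2 * (t ^ (a + 1) * (1 - t) ^ b)) _ _
  have int1 : (∫ s in Ioo (0:ℝ) 1, s ^ (a + b)) = 1 / (a + b + 1 : ℝ) := by
    rw [← integral_Ioc_eq_integral_Ioo, ← intervalIntegral.integral_of_le (by norm_num : (0:ℝ) ≤ 1),
      integral_pow]
    push_cast
    rw [zero_pow (by omega)]
    ring
  have int2 : (∫ t in Ioo (0:ℝ) 1, 2 * (t ^ (a + 1) * (1 - t) ^ b))
      = 2 * ((a + 1).factorial * b.factorial : ℝ) / (a + b + 2).factorial := by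
    rw [← integral_Ioc_eq_integral_Ioo, ← intervalIntegral.integral_of_le (by norm_num : (0:ℝ) ≤ 1),
      intervalIntegral.integral_const_mul, beta_nat b (a + 1)]
    have : a + 1 + b + 1 = a + b + 2 := by ring
    rw [this]
    ring
  have hval : (∫ p in unitTriangle, g p)
      = 2 * ((a + 1).factorial * b.factorial : ℝ) / ((a + b + 1) * (a + b + 2).factorial) := by
    rw [step1, step2, step3, int1, int2]
    have h1 : ((a : ℝ) + b + 1) ≠ 0 := by positivity
    have h2 : ((a + b + 2).factorial : ℝ) ≠ 0 := Nat.cast_ne_zero.mpr (Nat.factorial_ne_zero _)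
    field_simp
  have hfact1 : ((a + b + 1).factorial : ℝ) ≠ 0 := Nat.cast_ne_zero.mpr (Nat.factorial_ne_zero _)
  have h1 : ((a : ℝ) + b + 1) ≠ 0 := by positivity
  have h2' : ((a : ℝ) + b + 2) ≠ 0 := by positivity
  have h2 : ((a + b + 2).factorial : ℝ) ≠ 0 := Nat.cast_ne_zero.mpr (Nat.factorial_ne_zero _)
  constructor
  · rw [hval]; ring_nf
  · rw [hval]
    have hch : ((a + b + 1).choose b : ℝ) * b.factorial * (a + 1).factorial
        = (a + b + 1).factorial := by
      have := Nat.choose_mul_factorial_mul_factorial (show b ≤ a + b + 1 by omega)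
      have heq : a + b + 1 - b = a + 1 := by omega
      rw [heq] at this
      exact_mod_cast congrArg (Nat.cast : ℕ → ℝ) this
    have hchne : ((a + b + 1).choose b : ℝ) ≠ 0 :=
      Nat.cast_ne_zero.mpr (Nat.choose_pos (by omega)).ne'
    have hfs : ((a + b + 2).factorial : ℝ) = (a + b + 2) * (a + b + 1).factorial := by
      rw [Nat.factorial_succ]; push_cast; ring
    rw [hfs]
    field_simp
    linear_combination hch
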